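/- Define d : ℕ → ℚ by d(0) = 0, d(1) = 1, d(2N) = d(N), d(2N+1) = (d(N) + d(N+1) + 1)/2. For every ε with 0 < ε and every sufficiently large N, the number of integers n < N such that d(n) ≤ (1/100)·log n is at most N^{0.183}. -/

import Mathlib

open Finset
set_option maxRecDepth 10000

/-- number of positions p with bit p ≠ bit (p+1) (counting the leading 1→0). -/
def tcX : ℕ → ℕ
  | 0 => 0
  | n+1 => tcX ((n+1)/2) + (if (n+1) % 2 = ((n+1)/2) % 2 then 0 else 1)
  decreasing_by exact Nat.div_lt_self (Nat.succ_pos n) one_lt_two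

lemma tcX_rec (n : ℕ) (h : n ≠ 0) :
    tcX n = tcX (n/2) + (if n % 2 = (n/2) % 2 then 0 else 1) := by
  obtain ⟨m, rfl⟩ := Nat.exists_eq_succ_of_ne_zero h
  simp [tcX]

lemma tcX_two_mul (n : ℕ) : tcX (2*n) = tcX n + n % 2 := by
  rcases Nat.eq_zero_or_pos n with rfl | hn
  · simp [tcX]
  · have h1 : 2*n/2 = n := by omega
    have h2 : 2*n % 2 = 0 := by omega
    rw [tcX_rec _ (by omega), h1, h2]
    rcases Nat.mod_two_eq_zero_or_one n with h | h <;> simp [h]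

lemma tcX_odd (n : ℕ) : tcX (2*n+1) + n % 2 = tcX n + 1 := by
  have h1 : (2*n+1)/2 = n := by omega
  have h2 : (2*n+1) % 2 = 1 := by omega
  rw [tcX_rec _ (by omega), h1, h2]
  rcases Nat.mod_two_eq_zero_or_one n with h | h <;> simp [h]

lemma tcX_parity (n : ℕ) : tcX n % 2 = n % 2 := by
  induction n using Nat.strong_induction_on with
  | _ n ih =>
    rcases Nat.eq_zero_or_pos n with rfl | hn
    · simp [tcX]
    · rw [tcX_rec _ (by omega)]
      have := ih (n/2) (Nat.div_lt_self hn one_lt_two)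
      rcases Nat.mod_two_eq_zero_or_one n with h | h <;>
        rcases Nat.mod_two_eq_zero_or_one (n/2) with h' | h' <;> simp [h, h'] <;> omega

lemma tcX_pos (n : ℕ) (hn : 1 ≤ n) : 1 ≤ tcX n := by
  induction n using Nat.strong_induction_on with
  | _ n ih =>
    rcases Nat.mod_two_eq_zero_or_one n with h | h
    · have h2 : n / 2 ≥ 1 := by omega
      have := ih (n/2) (by omega) h2
      rw [tcX_rec _ (by omega)]
      omega
    · have := tcX_parity n
      omega

lemma tcX_succ_le (n : ℕ) : tcX n ≤ tcX (n+1) + 1 := by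
  induction n using Nat.strong_induction_on with
  | _ n ih =>
    rcases Nat.even_or_odd n with ⟨m, hm⟩ | ⟨m, hm⟩
    · subst hm
      have e1 : tcX (m+m) = tcX m + m % 2 := by rw [← two_mul]; exact tcX_two_mul m
      have e2 : tcX (m+m+1) + m % 2 = tcX m + 1 := by rw [← two_mul]; exact tcX_odd m
      omega
    · subst hm
      have e1 : tcX (2*m+1) + m % 2 = tcX m + 1 := tcX_odd m
      have e2 : tcX (2*m+1+1) = tcX (m+1) + (m+1) % 2 := by
        have : 2*m+1+1 = 2*(m+1) := by ring
        rw [this]; exact tcX_two_mul (m+1)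
      have e3 : tcX m ≤ tcX (m+1) + 1 := ih m (by omega)
      omega

lemma tcX_le_d (d : ℕ → ℚ)
    (h0 : d 0 = 0) (h1 : d 1 = 1)
    (heven : ∀ N : ℕ, d (2 * N) = d N)
    (hodd : ∀ N : ℕ, d (2 * N + 1) = (d N + d (N + 1) + 1) / 2) :
    ∀ n : ℕ, ((tcX n + n % 2 : ℕ) : ℚ) ≤ 4 * d n := by
  intro n
  induction n using Nat.strong_induction_on with
  | _ n ih =>
    rcases Nat.eq_zero_or_pos n with rfl | hn
    · simp [tcX, h0]
    rcases Nat.even_or_odd n with ⟨m, hm⟩ | ⟨m, hm⟩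
    · have hm' : n = 2*m := by omega
      subst hm'
      have e1 : tcX (2*m) = tcX m + m % 2 := tcX_two_mul m
      have e2 : 2*m % 2 = 0 := by omega
      have ihm := ih m (by omega)
      rw [heven m, e1, e2]
      calc ((tcX m + m % 2 + 0 : ℕ) : ℚ) = ((tcX m + m % 2 : ℕ) : ℚ) := by push_cast; ring
        _ ≤ 4 * d m := ihm
    · have hm' : n = 2*m+1 := by omega
      subst hm'
      rcases Nat.eq_zero_or_pos m with rfl | hm0
      · have ht1 : tcX 1 = 1 := by simp [tcX]
        norm_num [h1, ht1]
      have ihm := ih m (by omega)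
      have ihm1 := ih (m+1) (by omega)
      have e1 : tcX (2*m+1) + m % 2 = tcX m + 1 := tcX_odd m
      have e2 : tcX m ≤ tcX (m+1) + 1 := tcX_succ_le m
      have e3 : (2*m+1) % 2 = 1 := by omega
      have key : 2 * (tcX (2*m+1) + 1) ≤ (tcX m + m % 2) + (tcX (m+1) + (m+1) % 2) + 4 := by
        omega
      have key' : ((2:ℚ)) * ((tcX (2*m+1) + 1 : ℕ) : ℚ)
          ≤ ((tcX m + m % 2 : ℕ) : ℚ) + ((tcX (m+1) + (m+1) % 2 : ℕ) : ℚ) + 4 := by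
        have := (Nat.cast_le (α := ℚ)).2 key
        push_cast at this ⊢
        linarith
      rw [hodd m, e3]
      have : ((tcX (2*m+1) + 1 : ℕ) : ℚ) ≤ 2 * d m + 2 * d (m+1) + 2 := by linarith
      calc ((tcX (2*m+1) + 1 : ℕ) : ℚ) ≤ 2 * d m + 2 * d (m+1) + 2 := this
        _ = 4 * ((d m + d (m + 1) + 1) / 2) := by ring

/-- the set of transition positions -/
def tsX : ℕ → Finset ℕ
  | 0 => ∅
  | n+1 => ((tsX ((n+1)/2)).image (· + 1)) ∪ (if (n+1) % 2 = ((n+1)/2) % 2 then ∅ else {0})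
  decreasing_by exact Nat.div_lt_self (Nat.succ_pos n) one_lt_two

lemma tsX_rec (n : ℕ) (h : n ≠ 0) :
    tsX n = ((tsX (n/2)).image (· + 1)) ∪ (if n % 2 = (n/2) % 2 then ∅ else {0}) := by
  obtain ⟨m, rfl⟩ := Nat.exists_eq_succ_of_ne_zero h
  simp [tsX]

lemma succ_inj' : Function.Injective (· + 1 : ℕ → ℕ) := add_left_injective 1

lemma zero_not_mem_image (s : Finset ℕ) : 0 ∉ s.image (· + 1) := by
  intro h
  obtain ⟨a, -, ha⟩ := Finset.mem_image.1 h
  exact Nat.succ_ne_zero a ha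

lemma tsX_card (n : ℕ) : (tsX n).card = tcX n := by
  induction n using Nat.strong_induction_on with
  | _ n ih =>
    rcases Nat.eq_zero_or_pos n with rfl | hn
    · simp [tsX, tcX]
    rw [tsX_rec _ (by omega), tcX_rec _ (by omega)]
    have hcard : ((tsX (n/2)).image (· + 1)).card = tcX (n/2) := by
      rw [Finset.card_image_of_injective _ succ_inj']
      exact ih (n/2) (Nat.div_lt_self hn one_lt_two)
    by_cases h : n % 2 = (n/2) % 2
    · simp [h, hcard]
    · simp only [h, if_neg, if_false]
      rw [Finset.card_union_of_disjoint (by simp), hcard]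
      simp

lemma tsX_subset (n : ℕ) : ∀ L : ℕ, n < 2^L → tsX n ⊆ range L := by
  induction n using Nat.strong_induction_on with
  | _ n ih =>
    intro L hL
    rcases Nat.eq_zero_or_pos n with rfl | hn
    · simp [tsX]
    have hL1 : 1 ≤ L := by
      by_contra h
      interval_cases L <;> omega
    have hdiv : n / 2 < 2^(L-1) := by
      have : 2^L = 2 * 2^(L-1) := by
        rw [← pow_succ']
        congr 1
        omega
      omega
    have hsub := ih (n/2) (Nat.div_lt_self hn one_lt_two) (L-1) hdiv
    rw [tsX_rec _ (by omega)]
    apply Finset.union_subset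
    · intro x hx
      simp only [Finset.mem_image] at hx
      obtain ⟨y, hy, rfl⟩ := hx
      have := hsub hy
      simp only [Finset.mem_range] at this ⊢
      omega
    · by_cases h : n % 2 = (n/2) % 2 <;> simp [h] <;> omega

lemma tsX_erase (n : ℕ) (h : n ≠ 0) :
    (tsX n).erase 0 = (tsX (n/2)).image (· + 1) := by
  rw [tsX_rec _ h]
  by_cases hc : n % 2 = (n/2) % 2
  · simp only [hc, if_pos, Finset.union_empty]
    exact Finset.erase_eq_of_notMem (zero_not_mem_image _)
  · simp only [hc, if_neg, if_false]
    rw [Finset.union_comm, Finset.erase_union_distrib]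
    simp only [Finset.erase_singleton, Finset.empty_union]
    exact Finset.erase_eq_of_notMem (zero_not_mem_image _)

lemma tsX_inj : ∀ n m : ℕ, tsX n = tsX m → n = m := by
  intro n
  induction n using Nat.strong_induction_on with
  | _ n ih =>
    intro m hnm
    rcases Nat.eq_zero_or_pos n with rfl | hn
    · by_contra h
      have h1 : 1 ≤ tcX m := tcX_pos m (by omega)
      have : (tsX m).card = 0 := by rw [← hnm]; simp [tsX]
      rw [tsX_card] at this
      omega
    rcases Nat.eq_zero_or_pos m with rfl | hm
    · exfalso
      have h1 : 1 ≤ tcX n := tcX_pos n (by omega)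
      have : (tsX n).card = 0 := by rw [hnm]; simp [tsX]
      rw [tsX_card] at this
      omega
    have hc : tcX n = tcX m := by rw [← tsX_card, ← tsX_card, hnm]
    have hpar : n % 2 = m % 2 := by
      have := tcX_parity n
      have := tcX_parity m
      omega
    have himg : (tsX (n/2)).image (· + 1) = (tsX (m/2)).image (· + 1) := by
      rw [← tsX_erase _ (by omega), ← tsX_erase _ (by omega), hnm]
    have hhalf : tsX (n/2) = tsX (m/2) :=
      Finset.image_injective succ_inj' himg
    have := ih (n/2) (Nat.div_lt_self hn one_lt_two) (m/2) hhalf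
    omega

lemma tcX_zero : tcX 0 = 0 := by simp [tcX]

lemma sum_choose_le_anal (L k : ℕ) (hk : k ≤ L) :
    (∑ j ∈ range (k+1), (L.choose j : ℝ)) ≤ 36^k * (36/35)^(L-k) := by
  set p : ℝ := 1/36 with hp
  set q : ℝ := 35/36 with hq
  have termle : ∀ j ∈ range (k+1), (L.choose j : ℝ) * (p^k * q^(L-k))
      ≤ p^j * q^(L-j) * (L.choose j) := by
    intro j hj
    rw [mem_range] at hj
    have hjk : j ≤ k := by omega
    have e1 : p^k = p^j * p^(k-j) := by rw [← pow_add]; congr 1; omega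
    have e2 : q^(L-j) = q^(k-j) * q^(L-k) := by rw [← pow_add]; congr 1; omega
    have hpq : p^(k-j) ≤ q^(k-j) := by
      apply pow_le_pow_left₀ (by norm_num) (by norm_num)
    have hc : (0:ℝ) ≤ (L.choose j : ℝ) := by positivity
    rw [e1, e2]
    have hbase : p^j * p^(k-j) * q^(L-k) ≤ p^j * (q^(k-j) * q^(L-k)) := by
      have h1 : (0:ℝ) ≤ p^j := by positivity
      have h2 : (0:ℝ) ≤ q^(L-k) := by positivity
      rw [mul_assoc]
      exact mul_le_mul_of_nonneg_left (mul_le_mul_of_nonneg_right hpq h2) h1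
    nlinarith
  have key : (∑ j ∈ range (k+1), (L.choose j : ℝ)) * (p^k * q^(L-k)) ≤ 1 := by
    rw [Finset.sum_mul]
    calc ∑ j ∈ range (k+1), (L.choose j : ℝ) * (p^k * q^(L-k))
        ≤ ∑ j ∈ range (k+1), p^j * q^(L-j) * (L.choose j) := Finset.sum_le_sum termle
      _ ≤ ∑ j ∈ range (L+1), p^j * q^(L-j) * (L.choose j) := by
          apply Finset.sum_le_sum_of_subset_of_nonneg
          · exact Finset.range_subset_range.2 (by omega)
          · intro j _ _
            positivity
      _ = (p + q)^L := (add_pow p q L).symm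
      _ = 1 := by norm_num [hp, hq]
  have hpos : (0:ℝ) < p^k * q^(L-k) := by positivity
  have hid : 36^k * ((36:ℝ)/35)^(L-k) * (p^k * q^(L-k)) = 1 := by
    rw [hp, hq]
    rw [show (36:ℝ)^k * (36/35)^(L-k) * ((1/36)^k * (35/36)^(L-k))
        = (36 * (1/36))^k * ((36/35) * (35/36))^(L-k) by rw [mul_pow, mul_pow]; ring]
    norm_num
  nlinarith [key, hpos]

lemma log_nine_eighth : Real.log (9/8) ≤ 0.11812 := by
  have h := Real.abs_log_sub_add_sum_range_le (x := -(1/8)) (by rw [abs_neg, abs_of_pos] <;> norm_num) 3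
  have habs : |(-(1/8):ℝ)| = 1/8 := by rw [abs_neg, abs_of_pos] <;> norm_num
  rw [habs] at h
  have hs : (∑ i ∈ range 3, (-(1/8):ℝ) ^ (i + 1) / (↑i + 1)) = -(1/8) + 1/128 - 1/1536 := by
    simp [Finset.sum_range_succ]
    norm_num
  rw [hs] at h
  have h18 : (1 - (-(1/8)):ℝ) = 9/8 := by norm_num
  rw [h18] at h
  rw [abs_le] at h
  have := h.1
  norm_num at this ⊢
  linarith

lemma log_3635 : Real.log (36/35) ≤ 0.02819 := by
  have h := Real.abs_log_sub_add_sum_range_le (x := -(1/35)) (by rw [abs_neg, abs_of_pos] <;> norm_num) 2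
  have habs : |(-(1/35):ℝ)| = 1/35 := by rw [abs_neg, abs_of_pos] <;> norm_num
  rw [habs] at h
  have hs : (∑ i ∈ range 2, (-(1/35):ℝ) ^ (i + 1) / (↑i + 1)) = -(1/35) + 1/2450 := by
    simp [Finset.sum_range_succ]
    norm_num
  rw [hs] at h
  have h135 : (1 - (-(1/35)):ℝ) = 36/35 := by norm_num
  rw [h135] at h
  rw [abs_le] at h
  have := h.1
  norm_num at this ⊢
  linarith

lemma log36_le : Real.log 36 ≤ 3.58386 := by
  have h36 : (36:ℝ) = 2^5 * (9/8) := by norm_num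
  rw [h36, Real.log_mul (by norm_num) (by norm_num), Real.log_pow]
  have h2 := Real.log_two_lt_d9
  have h98 := log_nine_eighth
  push_cast
  nlinarith


lemma x_big (N : ℕ) (hN : 2^500 ≤ N) : (346:ℝ) ≤ Real.log N := by
  have h1 : ((2:ℝ)^500) ≤ (N:ℝ) := by exact_mod_cast hN
  have h2 : Real.log (2^500) ≤ Real.log N := Real.log_le_log (by positivity) h1
  rw [Real.log_pow] at h2
  have := Real.log_two_gt_d9
  push_cast at h2
  linarith

lemma kL_le (N : ℕ) (hN : 2^500 ≤ N) :
    ⌊Real.log N / 25⌋₊ ≤ Nat.log2 N + 1 := by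
  set x := Real.log N with hx
  have hx0 : (0:ℝ) ≤ x := le_trans (by norm_num) (x_big N hN)
  have hk : (⌊x / 25⌋₊ : ℝ) ≤ x / 25 := Nat.floor_le (by positivity)
  have hup : (N:ℝ) ≤ (2:ℝ)^(Nat.log2 N + 1) := by
    exact_mod_cast (Nat.lt_log2_self (n := N)).le
  have hxle : x ≤ (Nat.log2 N + 1 : ℕ) * Real.log 2 := by
    have := Real.log_le_log (Nat.cast_pos.2 (lt_of_lt_of_le (by positivity) hN) : (0:ℝ) < N) hup
    rwa [Real.log_pow] at this
  have h2 := Real.log_two_lt_d9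
  have : (⌊x / 25⌋₊ : ℝ) ≤ ((Nat.log2 N + 1 : ℕ) : ℝ) := by
    have hL0 : (0:ℝ) ≤ ((Nat.log2 N + 1 : ℕ) : ℝ) := by positivity
    have hm : ((Nat.log2 N + 1 : ℕ):ℝ) * Real.log 2 ≤ ((Nat.log2 N + 1 : ℕ):ℝ) * 0.6931471808 :=
      mul_le_mul_of_nonneg_left h2.le hL0
    have hx346 := x_big N hN
    linarith
  exact_mod_cast this

lemma pow_bound (N : ℕ) (hN : 2^500 ≤ N) :
    (36:ℝ)^(⌊Real.log N / 25⌋₊) * (36/35)^((Nat.log2 N + 1) - ⌊Real.log N / 25⌋₊)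
      ≤ (N:ℝ)^(0.183:ℝ) := by
  set x := Real.log N with hxdef
  set k := ⌊x / 25⌋₊ with hkdef
  set L := Nat.log2 N + 1 with hLdef
  have hkL : k ≤ L := kL_le N hN
  have hx : (346:ℝ) ≤ x := x_big N hN
  have hx0 : (0:ℝ) ≤ x := by linarith
  have hk : (k:ℝ) ≤ x / 25 := Nat.floor_le (by positivity)
  -- lower bound side: (L-1) * log 2 ≤ x
  have hlow : ((L:ℝ) - 1) * Real.log 2 ≤ x := by
    have hself : (2:ℝ)^(Nat.log2 N) ≤ (N:ℝ) := by
      exact_mod_cast Nat.log2_self_le (by omega : N ≠ 0)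
    have := Real.log_le_log (by positivity) hself
    rw [Real.log_pow] at this
    have : ((Nat.log2 N : ℕ):ℝ) * Real.log 2 ≤ x := this
    push_cast [hLdef]
    push_cast at this
    linarith
  have h2lo := Real.log_two_gt_d9
  have hL : (L:ℝ) * 0.6931471803 ≤ x + 0.6931471803 := by
    have hL1 : (1:ℝ) ≤ (L:ℝ) := by
      have : (1:ℕ) ≤ L := by omega
      exact_mod_cast this
    have hm : ((L:ℝ)-1) * 0.6931471803 ≤ ((L:ℝ)-1) * Real.log 2 :=
      mul_le_mul_of_nonneg_left h2lo.le (by linarith)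
    linarith [hm, hlow]
  -- logs
  have hlog36pos : (0:ℝ) ≤ Real.log 36 := Real.log_nonneg (by norm_num)
  have hlog3635pos : (0:ℝ) ≤ Real.log (36/35) := Real.log_nonneg (by norm_num)
  have hLK : ((L - k : ℕ):ℝ) = (L:ℝ) - (k:ℝ) := by
    push_cast [Nat.cast_sub hkL]; ring
  have hlogLHS : Real.log ((36:ℝ)^k * (36/35)^(L-k))
      = (k:ℝ) * Real.log 36 + ((L-k : ℕ):ℝ) * Real.log (36/35) := by
    rw [Real.log_mul (by positivity) (by positivity), Real.log_pow, Real.log_pow]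
  have h1 : (k:ℝ) * Real.log 36 ≤ (k:ℝ) * 3.58386 :=
    mul_le_mul_of_nonneg_left log36_le (by positivity)
  have h2 : ((L-k:ℕ):ℝ) * Real.log (36/35) ≤ ((L-k:ℕ):ℝ) * 0.02819 :=
    mul_le_mul_of_nonneg_left log_3635 (by positivity)
  have hkey : Real.log ((36:ℝ)^k * (36/35)^(L-k)) ≤ 0.183 * x := by
    rw [hlogLHS]
    have hk0 : (0:ℝ) ≤ (k:ℝ) := by positivity
    have hLk0 : (0:ℝ) ≤ ((L-k:ℕ):ℝ) := by positivity
    rw [hLK] at h2 hLk0 ⊢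
    linarith
  have hpos : (0:ℝ) < (36:ℝ)^k * (36/35)^(L-k) := by positivity
  have := Real.exp_le_exp.2 hkey
  rw [Real.exp_log hpos] at this
  rw [Real.rpow_def_of_pos (Nat.cast_pos.2 (lt_of_lt_of_le (by positivity) hN) : (0:ℝ) < (N:ℝ))]
  calc (36:ℝ)^k * (36/35)^(L-k) ≤ Real.exp (0.183 * x) := this
    _ = Real.exp (Real.log N * 0.183) := by rw [hxdef]; ring_nf


theorem vdc_small_discrepancy_upper (d : ℕ → ℚ)
    (h0 : d 0 = 0) (h1 : d 1 = 1)
    (heven : ∀ N : ℕ, d (2 * N) = d N)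
    (hodd : ∀ N : ℕ, d (2 * N + 1) = (d N + d (N + 1) + 1) / 2)
    (ε : ℝ) (hε : 0 < ε) :
    ∃ N₀ : ℕ, ∀ N : ℕ, N₀ ≤ N →
      (((Finset.range N).filter fun n => (d n : ℝ) ≤ Real.log n / 100).card : ℝ)
        ≤ (N : ℝ) ^ (0.183 : ℝ) := by
  refine ⟨2^500, fun N hN => ?_⟩
  set x := Real.log N with hxdef
  set k := ⌊x / 25⌋₊ with hkdef
  set L := Nat.log2 N + 1 with hLdef
  have hx346 : (346:ℝ) ≤ x := x_big N hN
  have hx0 : (0:ℝ) ≤ x := by linarith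
  have hkL : k ≤ L := kL_le N hN
  set B := (Finset.range N).filter fun n => (d n : ℝ) ≤ Real.log n / 100 with hBdef
  set T := (range (k+1)).biUnion (fun j => Finset.powersetCard j (range L)) with hTdef
  have hmem : ∀ n ∈ B, tsX n ∈ T := by
    intro n hn
    rw [hBdef, Finset.mem_filter, Finset.mem_range] at hn
    obtain ⟨hnN, hd⟩ := hn
    have htc : tcX n ≤ k := by
      apply Nat.le_floor
      rcases Nat.eq_zero_or_pos n with rfl | hn1
      · rw [tcX_zero]
        exact_mod_cast (by positivity : (0:ℝ) ≤ x/25)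
      · have hq := tcX_le_d d h0 h1 heven hodd n
        have hr : ((tcX n + n % 2 : ℕ) : ℝ) ≤ 4 * ((d n : ℚ) : ℝ) := by
          exact_mod_cast hq
        have hlogn : Real.log n ≤ x := by
          rw [hxdef]
          apply Real.log_le_log (by exact_mod_cast hn1)
          exact_mod_cast hnN.le
        push_cast at hr
        have hlogn0 : (0:ℝ) ≤ Real.log n := Real.log_natCast_nonneg n
        have : (tcX n : ℝ) ≤ 4 * (Real.log n / 100) := by linarith
        linarith
    rw [hTdef, Finset.mem_biUnion]
    refine ⟨tcX n, Finset.mem_range.2 (by omega), Finset.mem_powersetCard.2 ⟨?_, tsX_card n⟩⟩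
    apply tsX_subset n L
    calc n < N := hnN
      _ < 2^L := Nat.lt_log2_self
  have hcard1 : B.card ≤ T.card :=
    Finset.card_le_card_of_injOn tsX hmem (fun a _ b _ h => tsX_inj a b h)
  have hcard2 : T.card ≤ ∑ j ∈ range (k+1), L.choose j := by
    calc T.card ≤ ∑ j ∈ range (k+1), (Finset.powersetCard j (range L)).card :=
          Finset.card_biUnion_le
      _ = ∑ j ∈ range (k+1), L.choose j := by
          apply Finset.sum_congr rfl
          intro j _
          rw [Finset.card_powersetCard, Finset.card_range]
  have hcast : (B.card : ℝ) ≤ ∑ j ∈ range (k+1), (L.choose j : ℝ) := by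
    have := le_trans hcard1 hcard2
    calc (B.card : ℝ) ≤ ((∑ j ∈ range (k+1), L.choose j : ℕ) : ℝ) := by exact_mod_cast this
      _ = ∑ j ∈ range (k+1), (L.choose j : ℝ) := by push_cast; ring
  calc (B.card : ℝ) ≤ ∑ j ∈ range (k+1), (L.choose j : ℝ) := hcast
    _ ≤ 36^k * (36/35)^(L-k) := sum_choose_le_anal L k hkL
    _ ≤ (N:ℝ)^(0.183:ℝ) := pow_bound N hN
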